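/- Let $f_l(t) = \sum_{i=0}^{l} t^i$. For every integer $n \geq 1$ and odd integers $3 \leq p \leq q$, the polynomial $D_n(t) = -f_{2n-2} f_{p-1} f_{q-1} + f_{2n-1} f_{p-2} f_{q-1} + f_{2n-1} f_{p-1} f_{q-2}$ has constant coefficient $1$ and coefficient of $t$ equal to $3$ when $n \geq 2$ (and $4$ when $n = 1$); in particular $D_n(t)$ is never a polynomial with all coefficients in $\{-1, 0, 1\}$. -/

import Mathlib

open Polynomial

noncomputable def f (l : ℕ) : Polynomial ℤ := ∑ i ∈ Finset.range (l + 1), X ^ i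

lemma f_coeff (l k : ℕ) : (f l).coeff k = if k ≤ l then 1 else 0 := by
  simp only [f, Polynomial.finset_sum_coeff, Polynomial.coeff_X_pow]
  rw [Finset.sum_ite_eq (Finset.range (l + 1)) k (fun _ => (1 : ℤ))]
  simp [Nat.lt_succ_iff]

theorem stmt16 (n p q : ℕ) (hn : 1 ≤ n) (hp : Odd p) (hq : Odd q)
    (hp3 : 3 ≤ p) (hpq : p ≤ q) :
    (-(f (2 * n - 2)) * f (p - 1) * f (q - 1)
      + f (2 * n - 1) * f (p - 2) * f (q - 1)
      + f (2 * n - 1) * f (p - 1) * f (q - 2)).coeff 0 = 1 ∧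
    (2 ≤ n → (-(f (2 * n - 2)) * f (p - 1) * f (q - 1)
      + f (2 * n - 1) * f (p - 2) * f (q - 1)
      + f (2 * n - 1) * f (p - 1) * f (q - 2)).coeff 1 = 3) ∧
    (n = 1 → (-(f (2 * n - 2)) * f (p - 1) * f (q - 1)
      + f (2 * n - 1) * f (p - 2) * f (q - 1)
      + f (2 * n - 1) * f (p - 1) * f (q - 2)).coeff 1 = 4) ∧
    ¬ (∀ k : ℕ, (-(f (2 * n - 2)) * f (p - 1) * f (q - 1)
      + f (2 * n - 1) * f (p - 2) * f (q - 1)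
      + f (2 * n - 1) * f (p - 1) * f (q - 2)).coeff k ∈ ({-1, 0, 1} : Set ℤ)) := by
  have h0 : (-(f (2 * n - 2)) * f (p - 1) * f (q - 1)
      + f (2 * n - 1) * f (p - 2) * f (q - 1)
      + f (2 * n - 1) * f (p - 1) * f (q - 2)).coeff 0 = 1 := by
    simp only [Polynomial.coeff_add, Polynomial.mul_coeff_zero, Polynomial.coeff_neg, f_coeff]
    norm_num
  have h1 : ∀ m : ℕ, n = m → (-(f (2 * n - 2)) * f (p - 1) * f (q - 1)
      + f (2 * n - 1) * f (p - 2) * f (q - 1)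
      + f (2 * n - 1) * f (p - 1) * f (q - 2)).coeff 1 = if n = 1 then 4 else 3 := by
    intro m _
    simp only [Polynomial.coeff_add, Polynomial.mul_coeff_one, Polynomial.mul_coeff_zero,
      Polynomial.coeff_neg, f_coeff]
    have hp1 : 1 ≤ p - 1 := by omega
    have hp2 : 1 ≤ p - 2 := by omega
    have hq1 : 1 ≤ q - 1 := by omega
    have hq2 : 1 ≤ q - 2 := by omega
    have h2n1 : 1 ≤ 2 * n - 1 := by omega
    rcases Nat.lt_or_ge n 2 with h | h
    · have : n = 1 := by omega
      subst this
      simp only [if_pos hp1, if_pos hp2, if_pos hq1, if_pos hq2]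
      norm_num
    · have hn1 : n ≠ 1 := by omega
      have h2n2 : 1 ≤ 2 * n - 2 := by omega
      simp only [if_pos (le_refl (0:ℕ)), Nat.zero_le, if_pos, hp1, hp2, hq1, hq2, h2n1, h2n2,
        if_neg hn1]
      norm_num
  have h1' := h1 n rfl
  refine ⟨h0, ?_, ?_, ?_⟩
  · intro h2
    rw [h1', if_neg (by omega)]
  · intro h2
    rw [h1', if_pos h2]
  · intro hall
    have := hall 1
    rw [h1'] at this
    simp only [Set.mem_insert_iff, Set.mem_singleton_iff] at this
    split_ifs at this <;> rcases this with h | h | h <;> norm_num at h
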